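/- Let d ≥ 1 and let P ⊆ ℝ^d be a closed convex cone which is pointed (P ∩ (−P) = {0}), with topological interior Ω, and let a ∈ Ω. Fix k ∈ ℕ and b ∈ Ω with b − k•a ∈ Ω. Set L_k := (Ω + k•a) \ (Ω + (k+1)•a) and for x ∈ L_k let m(x) be the least m ∈ ℕ with x + m•a ∈ Ω + b. Then for every n ∈ ℕ the set {x ∈ L_k : m(x) ≥ n} is relatively closed in L_k; consequently the function m : L_k → ℕ is Borel measurable, and the map χ : L_k → ℝ^d, χ(x) = x + m(x)•a, is Borel measurable. -/

import Mathlib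

open Set Pointwise

/-- For a pointed closed convex cone `P ⊆ ℝ^d` (`d ≥ 1`) with interior `Ω`,
`a ∈ Ω`, `k ∈ ℕ` and `b ∈ Ω` with `b - k•a ∈ Ω`: with `m x` the least `m ∈ ℕ`
such that `x + m•a ∈ Ω + b`, the sets `{x ∈ L_k : m x ≥ n}` are relatively
closed in `L_k`, the function `m` is Borel measurable on `L_k`, and so is the
map `χ(x) = x + m(x)•a`. -/
theorem stmt_14 (d : ℕ) (hd : 1 ≤ d) (P : Set (Fin d → ℝ)) (hclosed : IsClosed P)
    (hadd : ∀ x ∈ P, ∀ y ∈ P, x + y ∈ P)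
    (hsmul : ∀ (t : ℝ), 0 ≤ t → ∀ x ∈ P, t • x ∈ P)
    (hpointed : P ∩ (-P) = {0})
    (a : Fin d → ℝ) (ha : a ∈ interior P)
    (k : ℕ) (b : Fin d → ℝ) (hb : b ∈ interior P) (hbk : b - k • a ∈ interior P)
    (Lk : Set (Fin d → ℝ))
    (hLk : Lk = ((fun x => x + k • a) '' interior P) \ ((fun x => x + (k + 1) • a) '' interior P))
    (m : (Fin d → ℝ) → ℕ)
    (hm : ∀ x ∈ Lk, IsLeast {j : ℕ | x + j • a ∈ (fun y => y + b) '' interior P} (m x)) :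
    (∀ n : ℕ, ∃ F : Set (Fin d → ℝ), IsClosed F ∧ {x ∈ Lk | n ≤ m x} = Lk ∩ F) ∧
      Measurable (Lk.restrict m) ∧
      Measurable (Lk.restrict fun x => x + m x • a) := by
  have hopen : IsOpen ((fun y => y + b) '' interior P) :=
    (isOpenMap_add_right b) _ isOpen_interior
  set F : ℕ → Set (Fin d → ℝ) := fun n =>
    ⋂ j ∈ Finset.range n, (fun x => x + (j : ℕ) • a) ⁻¹' ((fun y => y + b) '' interior P)ᶜ
    with hF
  have hFclosed : ∀ n, IsClosed (F n) := by
    intro n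
    refine isClosed_biInter fun j _ => ?_
    exact (hopen.isClosed_compl).preimage (continuous_id.add continuous_const)
  have hkey : ∀ n : ℕ, {x ∈ Lk | n ≤ m x} = Lk ∩ F n := by
    intro n
    ext x
    simp only [hF, mem_setOf_eq, mem_inter_iff, mem_iInter, Finset.mem_range, mem_preimage,
      mem_compl_iff]
    constructor
    · rintro ⟨hx, hn⟩
      refine ⟨hx, fun j hj hmem => ?_⟩
      exact absurd ((hm x hx).2 hmem) (by omega)
    · rintro ⟨hx, hall⟩
      refine ⟨hx, ?_⟩
      by_contra hlt
      exact hall (m x) (by omega) ((hm x hx).1)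
  have hMeas : ∀ n : ℕ, MeasurableSet {p : Lk | n ≤ m p.1} := by
    intro n
    have : {p : Lk | n ≤ m p.1} = Subtype.val ⁻¹' (F n) := by
      ext ⟨x, hx⟩
      have := hkey n
      constructor
      · intro hnx
        have : x ∈ Lk ∩ F n := (hkey n) ▸ (⟨hx, hnx⟩ : x ∈ {x ∈ Lk | n ≤ m x})
        exact this.2
      · intro hFx
        have : x ∈ {x ∈ Lk | n ≤ m x} := (hkey n) ▸ (⟨hx, hFx⟩ : x ∈ Lk ∩ F n)
        exact this.2
    rw [this]
    exact (hFclosed n).measurableSet.preimage measurable_subtype_coe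
  have hmMeas : Measurable (Lk.restrict m) := by
    apply measurable_to_countable'
    intro n
    have : (Lk.restrict m) ⁻¹' {n} = {p : Lk | n ≤ m p.1} \ {p : Lk | n + 1 ≤ m p.1} := by
      ext p
      simp only [mem_preimage, mem_singleton_iff, mem_diff, mem_setOf_eq, Set.restrict_apply]
      change m p.1 = n ↔ _
      omega
    rw [this]
    exact (hMeas n).diff (hMeas (n + 1))
  refine ⟨fun n => ⟨F n, hFclosed n, hkey n⟩, hmMeas, ?_⟩
  have : (Lk.restrict fun x => x + m x • a) = fun p : Lk => (p : Fin d → ℝ) + (Lk.restrict m p) • a := by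
    rfl
  rw [this]
  exact measurable_subtype_coe.add ((measurable_from_top (f := fun n : ℕ => n • a)).comp hmMeas)
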